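/- arXiv:2510.10377 — 2 statements merged into one kernel-verified Lean document; each statement's English description precedes it below -/
import Mathlib

section
/- Let R be a commutative ℚ-algebra and let H(t), E(t) ∈ R[[t]] have constant term 1 with H(t)·E(t) = 1. Then for every d ≥ 1, E_d = (-1)^d · det(M), where M is the d×d matrix with entries M_{i,j} = H_{1-i+j} (with the convention H_k = 0 for k < 0 and H_0 = 1). -/
open PowerSeries Finset

theorem coeff_E_eq_det_H
    (R : Type*) [CommRing R] [Algebra ℚ R]
    (H E : PowerSeries R)
    (hH0 : PowerSeries.constantCoeff H = 1)
    (hE0 : PowerSeries.constantCoeff E = 1)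
    (hHE : H * E = 1) :
    ∀ d : ℕ, 1 ≤ d →
      PowerSeries.coeff d E =
        (-1 : R) ^ d *
          Matrix.det (fun i j : Fin d =>
            if (i : ℕ) ≤ (j : ℕ) + 1 then
              PowerSeries.coeff ((j : ℕ) + 1 - (i : ℕ)) H
            else 0) := by
  intro d hd
  -- the key convolution identity
  have key : ∀ m : ℕ, ∑ k ∈ range (m + 1),
      PowerSeries.coeff k H * PowerSeries.coeff (m - k) E
      = if m = 0 then 1 else 0 := by
    intro m
    have := congrArg (PowerSeries.coeff m) hHE
    rwa [PowerSeries.coeff_mul, Finset.Nat.sum_antidiagonal_eq_sum_range_succ_mk,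
      PowerSeries.coeff_one] at this
  -- the big upper-triangular matrices
  set A : Matrix (Fin (d + 1)) (Fin (d + 1)) R := fun i j =>
    if (i : ℕ) ≤ (j : ℕ) then PowerSeries.coeff ((j : ℕ) - (i : ℕ)) H else 0 with hA
  set B : Matrix (Fin (d + 1)) (Fin (d + 1)) R := fun i j =>
    if (i : ℕ) ≤ (j : ℕ) then PowerSeries.coeff ((j : ℕ) - (i : ℕ)) E else 0 with hB
  have hAB : A * B = 1 := by
    ext i j
    rw [Matrix.mul_apply]
    have : ∀ k : Fin (d + 1), A i k * B k j =
        (fun t : ℕ => (if (i : ℕ) ≤ t then PowerSeries.coeff (t - (i : ℕ)) H else 0) *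
          (if t ≤ (j : ℕ) then PowerSeries.coeff ((j : ℕ) - t) E else 0)) (k : ℕ) := by
      intro k; rfl
    rw [Finset.sum_congr rfl (fun k _ => this k),
      Fin.sum_univ_eq_sum_range
        (fun t : ℕ => (if (i : ℕ) ≤ t then PowerSeries.coeff (t - (i : ℕ)) H else 0) *
          (if t ≤ (j : ℕ) then PowerSeries.coeff ((j : ℕ) - t) E else 0)) (d + 1)]
    by_cases hij : (i : ℕ) ≤ (j : ℕ)
    · have hsub : Finset.Icc (i : ℕ) (j : ℕ) ⊆ Finset.range (d + 1) := by
        intro x hx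
        simp only [Finset.mem_Icc] at hx
        simp only [Finset.mem_range]
        omega
      rw [← Finset.sum_subset hsub (by
        intro x _ hx
        simp only [Finset.mem_Icc, not_and_or, not_le] at hx
        by_cases h1 : (i : ℕ) ≤ x
        · rw [if_neg (show ¬ x ≤ (j : ℕ) by omega), mul_zero]
        · rw [if_neg h1, zero_mul])]
      have hIcc : Finset.Icc (i : ℕ) (j : ℕ) = Finset.Ico (i : ℕ) ((j : ℕ) + 1) := by
        rw [Finset.Ico_add_one_right_eq_Icc]
      rw [hIcc, Finset.sum_Ico_eq_sum_range]
      have hlen : (j : ℕ) + 1 - (i : ℕ) = ((j : ℕ) - (i : ℕ)) + 1 := by omega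
      rw [hlen]
      have hterm : ∀ m ∈ Finset.range (((j : ℕ) - (i : ℕ)) + 1),
          (if (i : ℕ) ≤ (i : ℕ) + m then PowerSeries.coeff ((i : ℕ) + m - (i : ℕ)) H else 0) *
            (if (i : ℕ) + m ≤ (j : ℕ) then PowerSeries.coeff ((j : ℕ) - ((i : ℕ) + m)) E else 0)
          = PowerSeries.coeff m H * PowerSeries.coeff (((j : ℕ) - (i : ℕ)) - m) E := by
        intro m hm
        simp only [Finset.mem_range] at hm
        have h1 : (i : ℕ) ≤ (i : ℕ) + m := Nat.le_add_right _ _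
        have h2 : (i : ℕ) + m ≤ (j : ℕ) := by omega
        have e1 : (i : ℕ) + m - (i : ℕ) = m := by omega
        have e2 : (j : ℕ) - ((i : ℕ) + m) = ((j : ℕ) - (i : ℕ)) - m := by omega
        rw [if_pos h1, if_pos h2, e1, e2]
      rw [Finset.sum_congr rfl hterm, key]
      by_cases hij' : i = j
      · subst hij'
        simp
      · have : (j : ℕ) - (i : ℕ) ≠ 0 := by
          have := Fin.val_ne_of_ne hij'
          omega
        rw [if_neg this, Matrix.one_apply_ne hij']
    · have : ∀ x ∈ Finset.range (d + 1),
          (if (i : ℕ) ≤ x then PowerSeries.coeff (x - (i : ℕ)) H else 0) *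
            (if x ≤ (j : ℕ) then PowerSeries.coeff ((j : ℕ) - x) E else 0) = 0 := by
        intro x _
        by_cases hx : (i : ℕ) ≤ x
        · rw [if_neg (show ¬ x ≤ (j : ℕ) by omega), mul_zero]
        · rw [if_neg hx, zero_mul]
      rw [Finset.sum_congr rfl this, Finset.sum_const, smul_zero,
        Matrix.one_apply_ne (fun h => hij (by rw [h]))]
  have hdet : A.det = 1 := by
    have htri : A.BlockTriangular id := by
      intro i j hji
      simp only [id_eq] at hji
      rw [hA]
      exact if_neg (by exact_mod_cast not_le.2 hji)
    rw [Matrix.det_of_upperTriangular htri]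
    have : ∀ i : Fin (d + 1), A i i = 1 := by
      intro i
      rw [hA]
      simp only [le_refl, if_true, Nat.sub_self]
      rw [PowerSeries.coeff_zero_eq_constantCoeff, hH0]
    rw [Finset.prod_congr rfl (fun i _ => this i), Finset.prod_const_one]
  have hBinv : A⁻¹ = B := Matrix.inv_eq_right_inv hAB
  have hadj : A⁻¹ = A.adjugate := Matrix.inv_eq_right_inv
    (by rw [Matrix.mul_adjugate, hdet, one_smul])
  have hBadj : B = A.adjugate := by rw [← hBinv, hadj]
  -- now extract the (0, last) entry
  have hBentry : B 0 (Fin.last d) = PowerSeries.coeff d E := by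
    rw [hB]
    simp [Fin.val_last]
  have hadj2 := Matrix.adjugate_fin_succ_eq_det_submatrix A 0 (Fin.last d)
  have hM : A.submatrix Fin.castSucc Fin.succ =
      (fun i j : Fin d => if (i : ℕ) ≤ (j : ℕ) + 1 then
        PowerSeries.coeff ((j : ℕ) + 1 - (i : ℕ)) H else 0) := by
    funext i j
    simp only [Matrix.submatrix_apply, hA, Fin.coe_castSucc, Fin.val_succ]
    rfl
  rw [← hBentry, hBadj, hadj2, Fin.succAbove_last, Fin.succAbove_zero, hM]
  simp [Fin.val_last]
end

section
/- Let R be a commutative ℚ-algebra, H(t) ∈ R[[t]] with constant term 1, and let P_d be defined by ∑_{k≥1} P_k t^k / k = log H(t) (formal logarithm). Then for every d ≥ 1, P_d = d · ∑_{λ ⊢ d} (-1)^{ℓ(λ)-1} · ((ℓ(λ)-1)! / ∏_i m_i(λ)!) · H_λ, where H_λ = ∏_j H_{λ_j}, the sum is over all partitions λ of d, ℓ(λ) is the number of parts, and m_i(λ) is the multiplicity of i. -/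
open PowerSeries Finset

/-- Formal logarithm of a power series (intended for series with constant term 1)
over a `ℚ`-algebra, defined coefficientwise by `log f = ∑ₙ (-1)^{n+1} (f-1)ⁿ/n`. -/
noncomputable def PowerSeries.logPS {R : Type*} [CommRing R] [Algebra ℚ R]
    (f : PowerSeries R) : PowerSeries R :=
  PowerSeries.mk fun d =>
    ∑ n ∈ Finset.Icc 1 d, (((-1 : ℚ) ^ (n + 1) / n)) • PowerSeries.coeff d ((f - 1) ^ n)

set_option maxHeartbeats 1000000


def ccc (s : Multiset ℕ) : ℚ :=
  (Multiset.card s).factorial / ∏ i ∈ s.toFinset, ((s.count i).factorial : ℚ)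

lemma ccc_denom_ne_zero (s : Multiset ℕ) :
    (∏ i ∈ s.toFinset, ((s.count i).factorial : ℚ)) ≠ 0 :=
  Finset.prod_ne_zero_iff.mpr fun _ _ => Nat.cast_ne_zero.mpr (Nat.factorial_ne_zero _)

lemma ccc_erase (s : Multiset ℕ) (k : ℕ) (hk : k ∈ s) :
    ccc (s.erase k) = (s.count k : ℚ) / (Multiset.card s : ℚ) * ccc s := by
  have hc1 : 1 ≤ s.count k := Multiset.one_le_count_iff_mem.mpr hk
  have hn1 : 1 ≤ Multiset.card s := Multiset.card_pos.mpr (by rintro rfl; simp at hk)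
  have hcard : Multiset.card (s.erase k) = Multiset.card s - 1 := Multiset.card_erase_of_mem hk
  have hsub : (s.erase k).toFinset ⊆ s.toFinset :=
    Multiset.toFinset_subset.mpr (Multiset.subset_of_le (Multiset.erase_le k s))
  have hP1 : (∏ i ∈ (s.erase k).toFinset, (((s.erase k).count i).factorial : ℚ))
      = ∏ i ∈ s.toFinset, (((s.erase k).count i).factorial : ℚ) := by
    apply (Finset.prod_subset hsub ?_)
    intro i _ hi
    rw [Multiset.count_eq_zero_of_notMem (by simpa using hi)]
    simp
  have hP2 : (∏ i ∈ s.toFinset, (((s.erase k).count i).factorial : ℚ))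
      = ((s.count k - 1).factorial : ℚ) * ∏ i ∈ s.toFinset.erase k, ((s.count i).factorial : ℚ) := by
    rw [← Finset.mul_prod_erase _ _ (Multiset.mem_toFinset.mpr hk), Multiset.count_erase_self]
    congr 1
    apply Finset.prod_congr rfl
    intro i hi
    rw [Multiset.count_erase_of_ne (Finset.ne_of_mem_erase hi)]
  have hP3 : (∏ i ∈ s.toFinset, ((s.count i).factorial : ℚ))
      = ((s.count k).factorial : ℚ) * ∏ i ∈ s.toFinset.erase k, ((s.count i).factorial : ℚ) :=
    (Finset.mul_prod_erase _ _ (Multiset.mem_toFinset.mpr hk)).symm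
  have hQ : (∏ i ∈ s.toFinset.erase k, ((s.count i).factorial : ℚ)) ≠ 0 :=
    Finset.prod_ne_zero_iff.mpr fun _ _ => Nat.cast_ne_zero.mpr (Nat.factorial_ne_zero _)
  have hfac1 : ((Multiset.card s).factorial : ℚ)
      = (Multiset.card s : ℚ) * ((Multiset.card s - 1).factorial : ℚ) := by
    rw [← Nat.mul_factorial_pred (Nat.one_le_iff_ne_zero.mp hn1)]; push_cast [Nat.cast_sub hn1]; ring
  have hfac2 : ((s.count k).factorial : ℚ)
      = (s.count k : ℚ) * ((s.count k - 1).factorial : ℚ) := by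
    rw [← Nat.mul_factorial_pred (Nat.one_le_iff_ne_zero.mp hc1)]; push_cast; ring
  rw [ccc, ccc, hP1, hP2, hP3, hcard]
  rw [hfac1, hfac2]
  have h1 : ((s.count k - 1).factorial : ℚ) ≠ 0 := Nat.cast_ne_zero.mpr (Nat.factorial_ne_zero _)
  have h2 : ((Multiset.card s : ℚ)) ≠ 0 := by positivity
  have h3 : ((s.count k : ℚ)) ≠ 0 := by positivity
  field_simp

lemma sum_ccc_erase (s : Multiset ℕ) (hs : s ≠ 0) :
    ∑ k ∈ s.toFinset, ccc (s.erase k) = ccc s := by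
  have hn : (Multiset.card s : ℚ) ≠ 0 := by
    have := Multiset.card_pos.mpr hs; positivity
  rw [Finset.sum_congr rfl (fun k hk => ccc_erase s k (Multiset.mem_toFinset.mp hk))]
  rw [← Finset.sum_mul, ← Finset.sum_div, ← Nat.cast_sum]
  rw [Multiset.toFinset_sum_count_eq]
  field_simp

def MS (d n : ℕ) : Finset (Multiset ℕ) :=
  ((Finset.univ : Finset d.Partition).image Nat.Partition.parts).filter
    fun s => Multiset.card s = n

lemma mem_MS {d n : ℕ} {s : Multiset ℕ} :
    s ∈ MS d n ↔ (s.sum = d ∧ ∀ i ∈ s, i ≠ 0) ∧ Multiset.card s = n := by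
  simp only [MS, Finset.mem_filter, Finset.mem_image, Finset.mem_univ, true_and,
    and_congr_left_iff]
  intro _
  constructor
  · rintro ⟨μ, rfl⟩
    exact ⟨μ.parts_sum, fun i hi => (μ.parts_pos hi).ne'⟩
  · rintro ⟨hsum, hpos⟩
    exact ⟨⟨s, fun {i} hi => Nat.pos_of_ne_zero (hpos i hi), hsum⟩, rfl⟩

lemma coeff_pow_eq {R : Type*} [CommRing R] [Algebra ℚ R] (G : PowerSeries R)
    (hG : constantCoeff G = 0) :
    ∀ n d : ℕ, coeff d (G ^ n) =
      ∑ s ∈ MS d n, ccc s • (Multiset.map (fun k => coeff k G) s).prod := by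
  intro n
  induction n with
  | zero =>
    intro d
    rw [pow_zero, coeff_one]
    rcases eq_or_ne d 0 with rfl | hd
    · rw [if_pos rfl]
      have hMS : MS 0 0 = {0} := by
        ext s
        simp only [mem_MS, Finset.mem_singleton, Multiset.card_eq_zero]
        constructor
        · rintro ⟨_, rfl⟩; rfl
        · rintro rfl; simp
      rw [hMS, Finset.sum_singleton]
      simp [ccc]
    · rw [if_neg hd]
      symm
      apply Finset.sum_eq_zero
      intro s hs
      rw [mem_MS] at hs
      obtain ⟨⟨hsum, _⟩, hcard⟩ := hs
      rw [Multiset.card_eq_zero] at hcard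
      subst hcard
      simp at hsum
      exact absurd hsum.symm hd
  | succ n ih =>
    intro d
    rw [pow_succ', coeff_mul]
    have hfil : ∀ p ∈ antidiagonal d,
        coeff p.1 G * coeff p.2 (G ^ n) ≠ 0 → p.1 ≠ 0 := by
      intro p _ h hp0
      apply h
      rw [hp0, coeff_zero_eq_constantCoeff_apply, hG, zero_mul]
    rw [← Finset.sum_filter_of_ne hfil]
    simp only [ih, Finset.mul_sum]
    rw [Finset.sum_sigma']
    have hbij : ∑ x ∈ ((antidiagonal d).filter fun p => p.1 ≠ 0).sigma (fun p => MS p.2 n),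
          coeff x.1.1 G * (ccc x.2 • (Multiset.map (fun k => coeff k G) x.2).prod)
        = ∑ y ∈ (MS d (n+1)).sigma (fun s => s.toFinset),
          coeff y.2 G *
            (ccc (y.1.erase y.2) •
              (Multiset.map (fun k => coeff k G) (y.1.erase y.2)).prod) := by
      refine Finset.sum_bij' (fun a _ => (⟨a.1.1 ::ₘ a.2, a.1.1⟩ : Σ _ : Multiset ℕ, ℕ))
        (fun b _ => (⟨(b.2, (b.1.erase b.2).sum), b.1.erase b.2⟩ : Σ _ : ℕ × ℕ, Multiset ℕ))
        ?_ ?_ ?_ ?_ ?_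
      · rintro ⟨⟨k, j⟩, t⟩ ha
        simp only [Finset.mem_sigma, Finset.mem_filter, Finset.HasAntidiagonal.mem_antidiagonal, mem_MS,
          Multiset.mem_toFinset] at ha ⊢
        obtain ⟨⟨hkj, hk0⟩, ⟨hsum, hpos⟩, hcard⟩ := ha
        refine ⟨⟨⟨?_, ?_⟩, ?_⟩, Multiset.mem_cons_self _ _⟩
        · simp [hsum, hkj]
        · intro i hi
          rcases Multiset.mem_cons.mp hi with rfl | hi
          · exact hk0
          · exact hpos i hi
        · simp [hcard]
      · rintro ⟨s, k⟩ hb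
        simp only [Finset.mem_sigma, Finset.mem_filter, Finset.HasAntidiagonal.mem_antidiagonal, mem_MS,
          Multiset.mem_toFinset] at hb ⊢
        obtain ⟨⟨⟨hsum, hpos⟩, hcard⟩, hk⟩ := hb
        refine ⟨⟨?_, hpos k hk⟩, ⟨by trivial, fun i hi => hpos i (Multiset.mem_of_mem_erase hi)⟩, ?_⟩
        · rw [← hsum]
          conv_rhs => rw [← Multiset.cons_erase hk]
          simp
        · rw [Multiset.card_erase_of_mem hk, hcard]
          exact Nat.pred_succ n
      · rintro ⟨⟨k, j⟩, t⟩ ha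
        simp only [Finset.mem_sigma, Finset.mem_filter, Finset.HasAntidiagonal.mem_antidiagonal, mem_MS] at ha
        obtain ⟨⟨hkj, hk0⟩, ⟨hsum, hpos⟩, hcard⟩ := ha
        simp only [Multiset.erase_cons_head]
        rw [hsum]
      · rintro ⟨s, k⟩ hb
        simp only [Finset.mem_sigma, Multiset.mem_toFinset] at hb
        simp only [Multiset.cons_erase hb.2]
      · rintro ⟨⟨k, j⟩, t⟩ _
        simp only [Multiset.erase_cons_head]
    rw [hbij, Finset.sum_sigma]
    apply Finset.sum_congr rfl
    intro s hs
    rw [mem_MS] at hs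
    obtain ⟨⟨hsum, hpos⟩, hcard⟩ := hs
    have hs0 : s ≠ 0 := by
      intro h; rw [h] at hcard; simp at hcard
    calc ∑ k ∈ s.toFinset, coeff k G *
          (ccc (s.erase k) • (Multiset.map (fun x => coeff x G) (s.erase k)).prod)
        = ∑ k ∈ s.toFinset, ccc (s.erase k) • (Multiset.map (fun x => coeff x G) s).prod := by
          apply Finset.sum_congr rfl
          intro k hk
          rw [mul_smul_comm, Multiset.prod_map_erase (f := fun x => coeff x G) (Multiset.mem_toFinset.mp hk)]
      _ = (∑ k ∈ s.toFinset, ccc (s.erase k)) • (Multiset.map (fun x => coeff x G) s).prod := by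
          rw [Finset.sum_smul]
      _ = ccc s • (Multiset.map (fun x => coeff x G) s).prod := by
          rw [sum_ccc_erase s hs0]

lemma card_le_sum' (s : Multiset ℕ) (h : ∀ i ∈ s, i ≠ 0) : Multiset.card s ≤ s.sum := by
  induction s using Multiset.induction_on with
  | empty => simp
  | cons a s ih =>
    simp only [Multiset.card_cons, Multiset.sum_cons]
    have ha : a ≠ 0 := h a (Multiset.mem_cons_self a s)
    have := ih (fun i hi => h i (Multiset.mem_cons_of_mem hi))
    omega

theorem P_eq_sum_partitions_H
    (R : Type*) [CommRing R] [Algebra ℚ R]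
    (H : PowerSeries R) (P : ℕ → R)
    (hH0 : PowerSeries.constantCoeff H = 1)
    (hlog : (PowerSeries.mk fun k => if k = 0 then 0 else ((k : ℚ)⁻¹) • P k)
      = PowerSeries.logPS H) :
    ∀ d : ℕ, 1 ≤ d →
      P d = (d : ℚ) •
        ∑ μ : d.Partition,
          (((-1 : ℚ) ^ (Multiset.card μ.parts - 1) * (Multiset.card μ.parts - 1).factorial) /
              (∏ i ∈ Finset.Icc 1 d, ((μ.parts.count i).factorial : ℚ))) •
            (μ.parts.map fun k => PowerSeries.coeff k H).prod := by
  intro d hd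
  have hdne : d ≠ 0 := by omega
  have hdQ : (d : ℚ) ≠ 0 := Nat.cast_ne_zero.mpr hdne
  have hG : constantCoeff (H - 1) = 0 := by
    rw [map_sub, hH0]; simp
  have h1 := congrArg (fun f => coeff d f) hlog
  simp only [PowerSeries.logPS, coeff_mk, if_neg hdne] at h1
  have key : (∑ n ∈ Finset.Icc 1 d, (((-1 : ℚ) ^ (n + 1) / n)) • coeff d ((H - 1) ^ n))
      = ∑ μ : d.Partition,
          (((-1 : ℚ) ^ (Multiset.card μ.parts - 1) * (Multiset.card μ.parts - 1).factorial) /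
              (∏ i ∈ Finset.Icc 1 d, ((μ.parts.count i).factorial : ℚ))) •
            (μ.parts.map fun k => PowerSeries.coeff k H).prod := by
    have himg : ∑ s ∈ (Finset.univ : Finset d.Partition).image Nat.Partition.parts,
          ((((-1 : ℚ) ^ (Multiset.card s - 1) * (Multiset.card s - 1).factorial) /
              (∏ i ∈ Finset.Icc 1 d, ((s.count i).factorial : ℚ))) •
            (s.map fun k => PowerSeries.coeff k H).prod)
        = ∑ μ : d.Partition,
          (((-1 : ℚ) ^ (Multiset.card μ.parts - 1) * (Multiset.card μ.parts - 1).factorial) /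
              (∏ i ∈ Finset.Icc 1 d, ((μ.parts.count i).factorial : ℚ))) •
            (μ.parts.map fun k => PowerSeries.coeff k H).prod :=
      Finset.sum_image (fun x _ y _ h => Nat.Partition.ext h)
    rw [← himg]
    have hmaps : ∀ s ∈ (Finset.univ : Finset d.Partition).image Nat.Partition.parts,
        Multiset.card s ∈ Finset.Icc 1 d := by
      intro s hs
      rw [Finset.mem_image] at hs
      obtain ⟨μ, _, rfl⟩ := hs
      rw [Finset.mem_Icc]
      constructor
      · rw [Nat.one_le_iff_ne_zero]
        intro h
        rw [Multiset.card_eq_zero] at h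
        apply hdne
        rw [← μ.parts_sum, h, Multiset.sum_zero]
      · calc Multiset.card μ.parts ≤ μ.parts.sum :=
              card_le_sum' _ (fun i hi => (μ.parts_pos hi).ne')
          _ = d := μ.parts_sum
    rw [← Finset.sum_fiberwise_of_maps_to hmaps]
    apply Finset.sum_congr rfl
    intro n hn
    rw [Finset.mem_Icc] at hn
    rw [coeff_pow_eq _ hG n d, Finset.smul_sum]
    apply Finset.sum_congr rfl
    intro s hs
    rw [mem_MS] at hs
    obtain ⟨⟨hsum, hpos⟩, hcard⟩ := hs
    have hprod : (Multiset.map (fun k => coeff k (H - 1)) s)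
        = Multiset.map (fun k => coeff k H) s := by
      apply Multiset.map_congr rfl
      intro k hk
      rw [map_sub, coeff_one, if_neg (hpos k hk), sub_zero]
    rw [hprod, smul_smul]
    congr 1
    have hD : (∏ i ∈ s.toFinset, ((s.count i).factorial : ℚ))
        = ∏ i ∈ Finset.Icc 1 d, ((s.count i).factorial : ℚ) := by
      apply Finset.prod_subset
      · intro i hi
        rw [Multiset.mem_toFinset] at hi
        rw [Finset.mem_Icc]
        exact ⟨Nat.one_le_iff_ne_zero.mpr (hpos i hi), hsum ▸
          Multiset.single_le_sum (fun x _ => Nat.zero_le x) i hi⟩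
      · intro i _ hi
        rw [Multiset.mem_toFinset] at hi
        rw [Multiset.count_eq_zero_of_notMem hi]
        simp
    rw [ccc, ← hD, hcard]
    have hn1 : 1 ≤ n := hn.1
    have hpow : (-1 : ℚ) ^ (n + 1) = (-1 : ℚ) ^ (n - 1) := by
      have h : n + 1 = (n - 1) + 2 := by omega
      rw [h, pow_add]
      simp
    have hfac : ((n.factorial : ℚ)) = (n : ℚ) * ((n - 1).factorial : ℚ) := by
      rw [← Nat.mul_factorial_pred (Nat.one_le_iff_ne_zero.mp hn1)]
      push_cast
      ring
    rw [hpow, hfac]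
    have hDne := ccc_denom_ne_zero s
    rw [hD] at hDne
    have hnQ : (n : ℚ) ≠ 0 := Nat.cast_ne_zero.mpr (by omega)
    field_simp
  rw [key] at h1
  rw [← h1, smul_smul, mul_inv_cancel₀ hdQ, one_smul]
end
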